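/- For every α > 0, every s ∈ ℝ, and every v ∈ ℝ with v ≠ 0, one has |sin(s/v)| ≤ (ln(e^α + |s|) / ln(e^α + |v|))^α. -/

import Mathlib

open Real Set

private lemma slr_log_pos {α : ℝ} (hα : 0 < α) {x : ℝ} (hx : 0 ≤ x) :
    0 < Real.log (Real.exp α + x) := by
  have h1 : (1 : ℝ) < Real.exp α := by
    linarith [Real.add_one_le_exp α]
  apply Real.log_pos; linarith

private lemma slr_log_ge {α : ℝ} {x : ℝ} (hx : 0 ≤ x) :
    α ≤ Real.log (Real.exp α + x) := by
  calc α = Real.log (Real.exp α) := (Real.log_exp α).symm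
  _ ≤ Real.log (Real.exp α + x) :=
    Real.log_le_log (Real.exp_pos α) (by linarith)

private lemma slr_hasDerivAt (α : ℝ) (hα : 0 < α) {x : ℝ} (hx : 0 ≤ x) :
    HasDerivAt (fun y => y / (Real.log (Real.exp α + y)) ^ α)
      ((1 * (Real.log (Real.exp α + x)) ^ α -
        x * (α * (Real.log (Real.exp α + x)) ^ (α - 1) * ((Real.exp α + x)⁻¹ * 1))) /
        ((Real.log (Real.exp α + x)) ^ α) ^ 2) x := by
  have hc : (0:ℝ) < Real.exp α + x := by positivity
  have hL : 0 < Real.log (Real.exp α + x) := slr_log_pos hα hx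
  have h1 : HasDerivAt (fun y : ℝ => Real.exp α + y) 1 x := by
    simpa using (hasDerivAt_id x).const_add (Real.exp α)
  have h2 : HasDerivAt (fun y : ℝ => Real.log (Real.exp α + y)) ((Real.exp α + x)⁻¹ * 1) x :=
    (Real.hasDerivAt_log hc.ne').comp x h1
  have h3 : HasDerivAt (fun y : ℝ => (Real.log (Real.exp α + y)) ^ α)
      (α * (Real.log (Real.exp α + x)) ^ (α - 1) * ((Real.exp α + x)⁻¹ * 1)) x :=
    by have := (Real.hasDerivAt_rpow_const (p := α) (Or.inl hL.ne')).comp x h2; exact this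
  have hne : ((Real.log (Real.exp α + x)) ^ α) ≠ 0 := by positivity
  exact (hasDerivAt_id x).div h3 hne

private lemma slr_mono (α : ℝ) (hα : 0 < α) :
    MonotoneOn (fun y => y / (Real.log (Real.exp α + y)) ^ α) (Set.Ici (0:ℝ)) := by
  have hint : interior (Set.Ici (0:ℝ)) = Set.Ioi 0 := interior_Ici
  apply monotoneOn_of_deriv_nonneg (convex_Ici 0)
  · intro x hx
    exact (slr_hasDerivAt α hα hx).continuousAt.continuousWithinAt
  · rw [hint]
    intro x hx
    exact (slr_hasDerivAt α hα (le_of_lt hx)).differentiableAt.differentiableWithinAt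
  · rw [hint]
    intro x hx
    have hx' : (0:ℝ) ≤ x := le_of_lt hx
    rw [(slr_hasDerivAt α hα hx').deriv]
    have hc : (0:ℝ) < Real.exp α + x := by positivity
    have hL : 0 < Real.log (Real.exp α + x) := slr_log_pos hα hx'
    set L := Real.log (Real.exp α + x) with hLdef
    have key : x * (α * L ^ (α - 1) * ((Real.exp α + x)⁻¹ * 1)) ≤ 1 * L ^ α := by
      have hLsplit : L ^ α = L ^ (α - 1) * L := by
        rw [← Real.rpow_add_one hL.ne' (α - 1)]; ring_nf
      rw [hLsplit]
      have hquot : x * α * (Real.exp α + x)⁻¹ ≤ α := by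
        rw [mul_inv_le_iff₀ hc]
        nlinarith [Real.exp_pos α, mul_pos hα (Real.exp_pos α)]
      have hLα : α ≤ L := slr_log_ge hx'
      have hpow : (0:ℝ) < L ^ (α - 1) := Real.rpow_pos_of_pos hL _
      calc x * (α * L ^ (α - 1) * ((Real.exp α + x)⁻¹ * 1))
          = L ^ (α - 1) * (x * α * (Real.exp α + x)⁻¹) := by ring
        _ ≤ L ^ (α - 1) * α := by
            exact mul_le_mul_of_nonneg_left hquot hpow.le
        _ ≤ L ^ (α - 1) * L := mul_le_mul_of_nonneg_left (hLα.trans_eq rfl) hpow.le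
        _ = 1 * (L ^ (α - 1) * L) := by ring
    have hsq : (0:ℝ) ≤ (L ^ α) ^ 2 := sq_nonneg _
    apply div_nonneg _ hsq
    linarith

private lemma slr_key (α : ℝ) (hα : 0 < α) {a b : ℝ} (ha : 0 ≤ a) (hab : a ≤ b) :
    a / (Real.log (Real.exp α + a)) ^ α ≤ b / (Real.log (Real.exp α + b)) ^ α :=
  slr_mono α hα ha (ha.trans hab) hab

theorem sine_log_ratio_inequality (α : ℝ) (hα : 0 < α) (s v : ℝ) (hv : v ≠ 0) :
    |Real.sin (s / v)| ≤
      (Real.log (Real.exp α + |s|) / Real.log (Real.exp α + |v|)) ^ α := by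
  have hLs : 0 < Real.log (Real.exp α + |s|) := slr_log_pos hα (abs_nonneg s)
  have hLv : 0 < Real.log (Real.exp α + |v|) := slr_log_pos hα (abs_nonneg v)
  rcases le_or_gt (|v|) (|s|) with h | h
  · -- ratio ≥ 1
    have h1 : (1:ℝ) ≤ Real.log (Real.exp α + |s|) / Real.log (Real.exp α + |v|) := by
      rw [le_div_iff₀ hLv, one_mul]
      exact Real.log_le_log (by positivity) (by linarith)
    calc |Real.sin (s / v)| ≤ 1 := Real.abs_sin_le_one _
      _ ≤ _ := Real.one_le_rpow h1 hα.le
  · -- |s| < |v|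
    have hvpos : 0 < |v| := abs_pos.mpr hv
    have h2 : |Real.sin (s / v)| ≤ |s| / |v| := by
      calc |Real.sin (s / v)| ≤ |s / v| := Real.abs_sin_le_abs
        _ = |s| / |v| := abs_div s v
    have h3 := slr_key α hα (abs_nonneg s) h.le
    have hps : 0 < (Real.log (Real.exp α + |s|)) ^ α := Real.rpow_pos_of_pos hLs _
    have hpv : 0 < (Real.log (Real.exp α + |v|)) ^ α := Real.rpow_pos_of_pos hLv _
    have h4 : |s| / |v| ≤ (Real.log (Real.exp α + |s|)) ^ α / (Real.log (Real.exp α + |v|)) ^ α := by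
      rw [div_le_div_iff₀ hvpos hpv]
      rw [div_le_div_iff₀ hps hpv] at h3
      linarith
    rw [Real.div_rpow hLs.le hLv.le]
    linarith
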